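/- For all W₁, W₂ ∈ D₂ one has ⟨ωW₁, ωW₂⟩ = sin² θ · ⟨W₁, W₂⟩. -/

import Mathlib

open RealInnerProductSpace

theorem inner_omega_omega_on_D2
    {V : Type*} [NormedAddCommGroup V] [InnerProductSpace ℝ V] [FiniteDimensional ℝ V]
    (φ : V →ₗ[ℝ] V) (ξ : V) (η : V →ₗ[ℝ] ℝ)
    (hφφ : ∀ X, φ (φ X) = -X + η X • ξ)
    (hηξ : η ξ = 1)
    (hφξ : φ ξ = 0)
    (hηφ : ∀ X, η (φ X) = 0)
    (hmet : ∀ X Y, ⟪φ X, φ Y⟫ = ⟪X, Y⟫ - η X * η Y)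
    (K : Submodule ℝ V) (hξK : ξ ∈ Kᗮ)
    (ϕ ω : V → V)
    (hϕK : ∀ U ∈ K, ϕ U ∈ K) (hωK : ∀ U ∈ K, ω U ∈ Kᗮ)
    (hVdec : ∀ U ∈ K, φ U = ϕ U + ω U)
    (B C : V → V)
    (hBK : ∀ X ∈ Kᗮ, B X ∈ K) (hCK : ∀ X ∈ Kᗮ, C X ∈ Kᗮ)
    (hHdec : ∀ X ∈ Kᗮ, φ X = B X + C X)
    (D₁ : Submodule ℝ V) (hD₁K : D₁ ≤ K) (hφD₁ : D₁.map φ = D₁)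
    (D₂ : Submodule ℝ V) (hD₂ : D₂ = K ⊓ D₁ᗮ)
    (θ : ℝ) (hslant : ∀ U ∈ D₂, U ≠ 0 → ‖ϕ U‖ = Real.cos θ * ‖φ U‖)
    :
    ∀ W₁ ∈ D₂, ∀ W₂ ∈ D₂, ⟪ω W₁, ω W₂⟫ = Real.sin θ ^ 2 * ⟪W₁, W₂⟫ := by
  have hη : ∀ X, η X = ⟪X, ξ⟫ := by
    intro X
    have h := hmet X ξ
    rw [hφξ, inner_zero_right, hηξ] at h
    linarith
  have hKmem : ∀ W ∈ D₂, W ∈ K := by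
    intro W hW
    rw [hD₂] at hW
    exact hW.1
  have hηK : ∀ U ∈ K, η U = 0 := by
    intro U hU
    rw [hη]
    exact (Submodule.mem_orthogonal K ξ).mp hξK U hU
  have hnormφ : ∀ U ∈ K, ⟪φ U, φ U⟫ = ⟪U, U⟫ := by
    intro U hU
    rw [hmet, hηK U hU]
    ring
  have hsplit : ∀ U ∈ K, ⟪φ U, φ U⟫ = ⟪ϕ U, ϕ U⟫ + ⟪ω U, ω U⟫ := by
    intro U hU
    have h0 : ⟪ϕ U, ω U⟫ = 0 :=
      Submodule.inner_right_of_mem_orthogonal (hϕK U hU) (hωK U hU)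
    rw [hVdec U hU, real_inner_add_add_self, h0]
    ring
  have key : ∀ W ∈ D₂, ⟪ω W, ω W⟫ = Real.sin θ ^ 2 * ⟪W, W⟫ := by
    intro W hW
    have hWK := hKmem W hW
    by_cases h : W = 0
    · subst h
      have h1 : ϕ 0 + ω 0 = 0 := by rw [← hVdec 0 K.zero_mem, map_zero]
      have h0 : ⟪ϕ 0, ω 0⟫ = 0 :=
        Submodule.inner_right_of_mem_orthogonal (hϕK 0 K.zero_mem) (hωK 0 K.zero_mem)
      have hneg : ω (0:V) = -ϕ 0 := eq_neg_of_add_eq_zero_right h1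
      have hω : ⟪ω (0:V), ω (0:V)⟫ = 0 := by
        nth_rewrite 1 [hneg]
        rw [inner_neg_left, h0, neg_zero]
      rw [hω]
      simp
    · have hcos := hslant W hW h
      have h1 : ‖ϕ W‖ ^ 2 = (Real.cos θ * ‖φ W‖) ^ 2 := by rw [hcos]
      have h2 : ⟪ϕ W, ϕ W⟫ = Real.cos θ ^ 2 * ⟪φ W, φ W⟫ := by
        rw [real_inner_self_eq_norm_sq, real_inner_self_eq_norm_sq]
        nlinarith [h1]
      have h3 := hnormφ W hWK
      have h4 := hsplit W hWK
      have h5 := Real.sin_sq_add_cos_sq θ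
      linear_combination -h4 + h3 - h2 - Real.cos θ ^ 2 * h3 - (inner ℝ W W : ℝ) * h5
  have hωadd : ∀ W₁ ∈ K, ∀ W₂ ∈ K, ω (W₁ + W₂) = ω W₁ + ω W₂ := by
    intro W₁ h₁ W₂ h₂
    have hsum : W₁ + W₂ ∈ K := K.add_mem h₁ h₂
    have heq : ϕ (W₁ + W₂) + ω (W₁ + W₂) = (ϕ W₁ + ϕ W₂) + (ω W₁ + ω W₂) := by
      rw [← hVdec _ hsum, map_add, hVdec _ h₁, hVdec _ h₂]
      abel
    set a := ϕ (W₁ + W₂) - ϕ W₁ - ϕ W₂ with ha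
    set b := ω (W₁ + W₂) - ω W₁ - ω W₂ with hb
    have haK : a ∈ K := K.sub_mem (K.sub_mem (hϕK _ hsum) (hϕK _ h₁)) (hϕK _ h₂)
    have hbKo : b ∈ Kᗮ := Kᗮ.sub_mem (Kᗮ.sub_mem (hωK _ hsum) (hωK _ h₁)) (hωK _ h₂)
    have hab : a + b = 0 := by
      have h' : a + b = (ϕ (W₁ + W₂) + ω (W₁ + W₂)) - ((ϕ W₁ + ϕ W₂) + (ω W₁ + ω W₂)) := by
        rw [ha, hb]; abel
      rw [h', heq, sub_self]
    have hbK : b ∈ K := by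
      have : b = -a := eq_neg_of_add_eq_zero_right hab
      rw [this]; exact K.neg_mem haK
    have hb0 : b = 0 := by
      have : ⟪b, b⟫ = 0 := Submodule.inner_right_of_mem_orthogonal hbK hbKo
      exact inner_self_eq_zero.mp this
    have : ω (W₁ + W₂) - (ω W₁ + ω W₂) = 0 := by
      rw [← sub_sub]; exact hb0
    exact sub_eq_zero.mp this
  intro W₁ hW₁ W₂ hW₂
  have hsum : W₁ + W₂ ∈ D₂ := D₂.add_mem hW₁ hW₂
  have k₁ := key W₁ hW₁
  have k₂ := key W₂ hW₂
  have k₃ := key _ hsum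
  rw [hωadd W₁ (hKmem W₁ hW₁) W₂ (hKmem W₂ hW₂), real_inner_add_add_self] at k₃
  rw [real_inner_add_add_self] at k₃
  linarith
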